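/- Let G be a group that is not weakly nilpotent. Then the non-nilpotent graph of G contains a triangle, i.e., there exist x, y, z ∈ G, pairwise distinct, such that ⟨x,y⟩, ⟨y,z⟩ and ⟨x,z⟩ are all non-nilpotent; in fact one can take z = xy. -/

import Mathlib

def nilizer {G : Type*} [Group G] (x : G) : Set G :=
  {g | Group.IsNilpotent (Subgroup.closure ({x, g} : Set G))}

def nilSet (G : Type*) [Group G] : Set G :=
  {x | ∀ y : G, Group.IsNilpotent (Subgroup.closure ({x, y} : Set G))}

lemma zpowers_nilpotent {G : Type*} [Group G] (x : G) :
    Group.IsNilpotent (Subgroup.zpowers x) := by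
  letI : CommGroup (Subgroup.zpowers x) :=
    { (Subgroup.zpowers x).toGroup with mul_comm := fun a b => IsMulCommutative.is_comm.comm a b }
  exact CommGroup.isNilpotent

theorem stmt11 {G : Type*} [Group G]
    (h : ∃ x y : G, ¬ Group.IsNilpotent (Subgroup.closure ({x, y} : Set G))) :
    ∃ x y : G, x ≠ y ∧ x ≠ x * y ∧ y ≠ x * y ∧
      ¬ Group.IsNilpotent (Subgroup.closure ({x, y} : Set G)) ∧
      ¬ Group.IsNilpotent (Subgroup.closure ({x, x * y} : Set G)) ∧
      ¬ Group.IsNilpotent (Subgroup.closure ({y, x * y} : Set G)) := by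
  obtain ⟨x, y, hxy⟩ := h
  have key : ∀ a b : G, Subgroup.closure ({a, b} : Set G) = Subgroup.closure ({a, a * b}) := by
    intro a b
    apply le_antisymm
    · rw [Subgroup.closure_le]
      rintro c (rfl | rfl)
      · exact Subgroup.subset_closure (Set.mem_insert _ _)
      · have ha : a ∈ Subgroup.closure ({a, a * c} : Set G) :=
          Subgroup.subset_closure (Set.mem_insert _ _)
        have hac : a * c ∈ Subgroup.closure ({a, a * c} : Set G) :=
          Subgroup.subset_closure (Set.mem_insert_of_mem _ rfl)
        have : a⁻¹ * (a * c) ∈ Subgroup.closure ({a, a * c} : Set G) :=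
          Subgroup.mul_mem _ (Subgroup.inv_mem _ ha) hac
        simpa using this
    · rw [Subgroup.closure_le]
      rintro c (rfl | rfl)
      · exact Subgroup.subset_closure (Set.mem_insert _ _)
      · exact Subgroup.mul_mem _ (Subgroup.subset_closure (Set.mem_insert _ _))
          (Subgroup.subset_closure (Set.mem_insert_of_mem _ rfl))
  have key2 : Subgroup.closure ({y, x * y} : Set G) = Subgroup.closure ({x, y}) := by
    apply le_antisymm
    · rw [Subgroup.closure_le]
      rintro c (rfl | rfl)
      · exact Subgroup.subset_closure (Set.mem_insert_of_mem _ rfl)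
      · exact Subgroup.mul_mem _ (Subgroup.subset_closure (Set.mem_insert _ _))
          (Subgroup.subset_closure (Set.mem_insert_of_mem _ rfl))
    · rw [Subgroup.closure_le]
      rintro c (rfl | rfl)
      · have h1 : y ∈ Subgroup.closure ({y, c * y} : Set G) :=
          Subgroup.subset_closure (Set.mem_insert _ _)
        have h2 : c * y ∈ Subgroup.closure ({y, c * y} : Set G) :=
          Subgroup.subset_closure (Set.mem_insert_of_mem _ rfl)
        have : (c * y) * y⁻¹ ∈ Subgroup.closure ({y, c * y} : Set G) :=
          Subgroup.mul_mem _ h2 (Subgroup.inv_mem _ h1)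
        simpa using this
      · exact Subgroup.subset_closure (Set.mem_insert _ _)
  refine ⟨x, y, ?_, ?_, ?_, hxy, ?_, ?_⟩
  · rintro rfl
    refine hxy ?_
    rw [Set.pair_eq_singleton, ← Subgroup.zpowers_eq_closure]
    exact zpowers_nilpotent x
  · intro hx
    have hy1 : y = 1 := by
      have := mul_left_cancel (a := x) (b := 1) (c := y) (by simpa using hx)
      exact this.symm
    subst hy1
    refine hxy ?_
    rw [Set.insert_eq, Subgroup.closure_union, Subgroup.closure_singleton_one,
      ← Subgroup.zpowers_eq_closure, sup_bot_eq]
    exact zpowers_nilpotent x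
  · intro hy
    have hx1 : x = 1 := by
      have := mul_right_cancel (a := 1) (b := y) (c := x) (by simpa using hy)
      exact this.symm
    subst hx1
    refine hxy ?_
    rw [Set.insert_eq, Subgroup.closure_union, Subgroup.closure_singleton_one,
      ← Subgroup.zpowers_eq_closure, bot_sup_eq]
    exact zpowers_nilpotent y
  · rw [← key]; exact hxy
  · rw [key2]; exact hxy
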